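/- For every natural number n ≥ 1, the clique number of the commuting graph of Sₙ = ⟨a, b | a^{n+1} = b² = 0, aba = 0, b aⁱ b = 0 ∀ i ≥ 1⟩ equals 2n − 1. -/

import Mathlib

/-- The commuting graph of a semigroup: vertices are the non-central
elements, two distinct vertices are adjacent iff they commute. -/
def CommutingGraph (S : Type*) [Semigroup S] :
    SimpleGraph {x : S // x ∉ Set.center S} where
  Adj a b := a ≠ b ∧ (a : S) * b = (b : S) * a
  symm := ⟨fun _ _ ⟨h, hc⟩ => ⟨h.symm, hc.symm⟩⟩
  loopless := ⟨fun _ ⟨h, _⟩ => h rfl⟩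

/-- The free semigroup with zero on the two generators `a = of false`, `b = of true`. -/
abbrev W2 := WithZero (FreeSemigroup Bool)

/-- The generator `a`. -/
def ga : FreeSemigroup Bool := FreeSemigroup.of false

/-- The generator `b`. -/
def gb : FreeSemigroup Bool := FreeSemigroup.of true

/-- `fsPow x k = x^(k+1)` (positive powers in a semigroup). -/
def fsPow (x : FreeSemigroup Bool) : ℕ → FreeSemigroup Bool
  | 0 => x
  | k + 1 => fsPow x k * x

/-- `apow i` is `a^i` for `i ≥ 1` (junk value `a` at `i = 0`). -/
def apow (i : ℕ) : FreeSemigroup Bool := fsPow ga (i - 1)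

/-- The defining relations of `Sₙ`: `a^(n+1) = b² = 0`, `aba = 0`, `b aⁱ b = 0` for `i ≥ 1`. -/
def SnRel (n : ℕ) : W2 → W2 → Prop := fun p q =>
  (p = ((apow (n + 1) : FreeSemigroup Bool) : W2) ∧ q = 0) ∨
  (p = ((gb * gb : FreeSemigroup Bool) : W2) ∧ q = 0) ∨
  (p = ((ga * gb * ga : FreeSemigroup Bool) : W2) ∧ q = 0) ∨
  (∃ i : ℕ, 1 ≤ i ∧ p = ((gb * apow i * gb : FreeSemigroup Bool) : W2) ∧ q = 0)

/-- The congruence generated by the relations of `Sₙ`. -/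
def SnCon (n : ℕ) : Con W2 := conGen (SnRel n)

/-- The semigroup `Sₙ = ⟨a, b | a^(n+1) = b² = 0, aba = baⁱb = 0 ∀ i ≥ 1⟩`. -/
def Sn (n : ℕ) : Type := (SnCon n).Quotient

instance (n : ℕ) : Semigroup (Sn n) := Con.semigroup _

/-- The canonical projection onto `Sₙ`. -/
def smk (n : ℕ) : W2 → Sn n := (SnCon n).toQuotient

/-! ### Word-level lemmas -/

lemma fsPow_add (x : FreeSemigroup Bool) (k l : ℕ) :
    fsPow x k * fsPow x l = fsPow x (k + l + 1) := by
  induction l with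
  | zero => rfl
  | succ l ih =>
    show fsPow x k * (fsPow x l * x) = _
    rw [← mul_assoc, ih]; rfl

lemma apow_add {i j : ℕ} (hi : 1 ≤ i) (hj : 1 ≤ j) :
    apow i * apow j = apow (i + j) := by
  unfold apow
  rw [fsPow_add]
  congr 1
  omega

lemma apow_one : apow 1 = ga := rfl

lemma apow_succ {i : ℕ} (hi : 1 ≤ i) : apow (i + 1) = apow i * ga := by
  rw [← apow_one, apow_add hi le_rfl]

lemma ga_mul_apow {i : ℕ} (hi : 1 ≤ i) : ga * apow i = apow (i + 1) := by
  rw [← apow_one, apow_add le_rfl hi, add_comm]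

/-! ### Basic facts about `Sₙ` -/

variable {n : ℕ}

/-- Image of a word in `Sₙ`. -/
def sk (n : ℕ) (w : FreeSemigroup Bool) : Sn n := smk n (w : W2)

/-- Image of zero in `Sₙ`. -/
def zz (n : ℕ) : Sn n := smk n 0

lemma smk_mul (u v : W2) : smk n (u * v) = smk n u * smk n v := rfl

lemma sk_mul (u v : FreeSemigroup Bool) : sk n (u * v) = sk n u * sk n v := by
  show smk n ((↑(u * v) : W2)) = _
  rw [WithZero.coe_mul]; rfl

lemma smk_eq_iff {u v : W2} : smk n u = smk n v ↔ SnCon n u v := Con.eq _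

lemma sn_surj (x : Sn n) : ∃ w : W2, smk n w = x := by
  induction x using Con.induction_on with
  | H w => exact ⟨w, rfl⟩

lemma zz_mul (x : Sn n) : zz n * x = zz n := by
  obtain ⟨w, rfl⟩ := sn_surj x
  show smk n 0 * smk n w = smk n 0
  rw [← smk_mul, zero_mul]

lemma mul_zz (x : Sn n) : x * zz n = zz n := by
  obtain ⟨w, rfl⟩ := sn_surj x
  show smk n w * smk n 0 = smk n 0
  rw [← smk_mul, mul_zero]

lemma rel_apow : sk n (apow (n + 1)) = zz n :=
  smk_eq_iff.2 (ConGen.Rel.of _ _ (Or.inl ⟨rfl, rfl⟩))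

lemma rel_bb : sk n (gb * gb) = zz n :=
  smk_eq_iff.2 (ConGen.Rel.of _ _ (Or.inr (Or.inl ⟨rfl, rfl⟩)))

lemma rel_aba : sk n (ga * gb * ga) = zz n :=
  smk_eq_iff.2 (ConGen.Rel.of _ _ (Or.inr (Or.inr (Or.inl ⟨rfl, rfl⟩))))

lemma rel_bab {i : ℕ} (hi : 1 ≤ i) : sk n (gb * apow i * gb) = zz n :=
  smk_eq_iff.2 (ConGen.Rel.of _ _ (Or.inr (Or.inr (Or.inr ⟨i, hi, rfl, rfl⟩))))

lemma sk_zero_left {u : FreeSemigroup Bool} (h : sk n u = zz n) (x : FreeSemigroup Bool) :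
    sk n (x * u) = zz n := by rw [sk_mul, h, mul_zz]

lemma sk_zero_right {u : FreeSemigroup Bool} (h : sk n u = zz n) (x : FreeSemigroup Bool) :
    sk n (u * x) = zz n := by rw [sk_mul, h, zz_mul]

/-- `a^m = 0` for `m ≥ n+1`. -/
lemma apow_big {m : ℕ} (hm : n + 1 ≤ m) : sk n (apow m) = zz n := by
  rcases eq_or_lt_of_le hm with h | h
  · rw [← h]; exact rel_apow
  · have : apow m = apow (n + 1) * apow (m - (n + 1)) := by
      rw [apow_add (by omega) (by omega)]; congr 1; omega
    rw [this]
    exact sk_zero_right rel_apow _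

/-- `aⁱ b aʲ = 0` for `i, j ≥ 1`. -/
lemma aba_big {i j : ℕ} (hi : 1 ≤ i) (hj : 1 ≤ j) :
    sk n (apow i * gb * apow j) = zz n := by
  rcases Nat.lt_or_ge i 2 with h1 | h1 <;> rcases Nat.lt_or_ge j 2 with h2 | h2
  · rw [show i = 1 by omega, show j = 1 by omega, apow_one]; exact rel_aba
  · have hd : apow j = ga * apow (j - 1) := by
      rw [ga_mul_apow (by omega)]; congr 1; omega
    have : apow i * gb * apow j = (ga * gb * ga) * apow (j - 1) := by
      rw [show i = 1 by omega, apow_one, hd]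
      simp only [mul_assoc]
    rw [this]; exact sk_zero_right rel_aba _
  · have hd : apow i = apow (i - 1) * ga := by
      rw [← apow_succ (by omega)]; congr 1; omega
    have : apow i * gb * apow j = apow (i - 1) * (ga * gb * ga) := by
      rw [show j = 1 by omega, apow_one, hd]
      simp only [mul_assoc]
    rw [this]; exact sk_zero_left rel_aba _
  · have hdi : apow i = apow (i - 1) * ga := by
      rw [← apow_succ (by omega)]; congr 1; omega
    have hdj : apow j = ga * apow (j - 1) := by
      rw [ga_mul_apow (by omega)]; congr 1; omega
    have : apow i * gb * apow j = apow (i - 1) * ((ga * gb * ga) * apow (j - 1)) := by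
      rw [hdi, hdj]; simp only [mul_assoc]
    rw [this]
    exact sk_zero_left (sk_zero_right rel_aba _) _

/-- Normal forms for elements of `Sₙ` (plus a formal identity `one`). -/
inductive En : Type
  | one | zero | A (k : ℕ) | AB (i : ℕ) | BA (j : ℕ)
deriving DecidableEq

/-- Left multiplication by `a` on normal forms. -/
def fa (n : ℕ) : En → En
  | .one => .A 1
  | .zero => .zero
  | .A k => if k < n then .A (k + 1) else .zero
  | .AB i => if i < n then .AB (i + 1) else .zero
  | .BA _ => .zero

/-- Left multiplication by `b` on normal forms. -/
def fb : En → En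
  | .one => .AB 0
  | .zero => .zero
  | .A k => .BA k
  | .AB _ => .zero
  | .BA _ => .zero

variable {n : ℕ}

lemma fa_zero : fa n .zero = .zero := rfl

lemma fa_iter_zero (m : ℕ) : (fa n)^[m] .zero = .zero :=
  Function.iterate_fixed rfl m

lemma fa_iter_A (m k : ℕ) :
    (fa n)^[m] (.A k) = if k + m ≤ n ∨ m = 0 then .A (k + m) else .zero := by
  induction m with
  | zero => simp
  | succ m ih =>
    rw [Function.iterate_succ_apply', ih]
    by_cases h : k + m ≤ n ∨ m = 0
    · rw [if_pos h]
      show (if k + m < n then En.A (k + m + 1) else En.zero) = _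
      by_cases h2 : k + m < n
      · rw [if_pos h2, if_pos (show k + (m+1) ≤ n ∨ m + 1 = 0 by omega)]; rfl
      · rw [if_neg h2, if_neg (show ¬(k + (m+1) ≤ n ∨ m + 1 = 0) by omega)]
    · rw [if_neg h, if_neg (show ¬(k + (m+1) ≤ n ∨ m + 1 = 0) by omega)]; rfl

lemma fa_iter_AB (m i : ℕ) :
    (fa n)^[m] (.AB i) = if i + m ≤ n ∨ m = 0 then .AB (i + m) else .zero := by
  induction m with
  | zero => simp
  | succ m ih =>
    rw [Function.iterate_succ_apply', ih]
    by_cases h : i + m ≤ n ∨ m = 0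
    · rw [if_pos h]
      show (if i + m < n then En.AB (i + m + 1) else En.zero) = _
      by_cases h2 : i + m < n
      · rw [if_pos h2, if_pos (show i + (m+1) ≤ n ∨ m + 1 = 0 by omega)]; rfl
      · rw [if_neg h2, if_neg (show ¬(i + (m+1) ≤ n ∨ m + 1 = 0) by omega)]
    · rw [if_neg h, if_neg (show ¬(i + (m+1) ≤ n ∨ m + 1 = 0) by omega)]; rfl

lemma fa_iter_BA {m : ℕ} (hm : 1 ≤ m) (j : ℕ) : (fa n)^[m] (.BA j) = .zero := by
  obtain ⟨m', rfl⟩ : ∃ m', m = m' + 1 := ⟨m - 1, by omega⟩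
  rw [Function.iterate_succ_apply]
  exact fa_iter_zero m'

lemma fa_iter_one (hn : 1 ≤ n) {m : ℕ} (hm : 1 ≤ m) :
    (fa n)^[m] .one = if m ≤ n then .A m else .zero := by
  obtain ⟨m', rfl⟩ : ∃ m', m = m' + 1 := ⟨m - 1, by omega⟩
  rw [Function.iterate_succ_apply]
  show (fa n)^[m'] (.A 1) = _
  rw [fa_iter_A]
  by_cases h : 1 + m' ≤ n
  · rw [if_pos (Or.inl h), if_pos (show m' + 1 ≤ n by omega)]
    congr 1; omega
  · rw [if_neg (show ¬(1 + m' ≤ n ∨ m' = 0) by omega), if_neg (show ¬(m' + 1 ≤ n) by omega)]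

/-! ### The invariant map -/

/-- Left-multiplication representation of the free semigroup on normal forms. -/
def phi (n : ℕ) : FreeSemigroup Bool →ₙ* Function.End En :=
  FreeSemigroup.lift (fun t => if t then fb else fa n)

lemma phi_mul_apply (u v : FreeSemigroup Bool) (x : En) :
    phi n (u * v) x = phi n u (phi n v x) := by
  rw [map_mul]; rfl

lemma phi_ga : phi n ga = fa n := rfl
lemma phi_gb : phi n gb = fb := rfl

lemma phi_apow {k : ℕ} (hk : 1 ≤ k) (x : En) : phi n (apow k) x = (fa n)^[k] x := by
  obtain ⟨k', rfl⟩ : ∃ k', k = k' + 1 := ⟨k - 1, by omega⟩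
  clear hk
  induction k' generalizing x with
  | zero => rfl
  | succ k' ih =>
    rw [apow_succ (by omega), phi_mul_apply, Function.iterate_succ_apply]
    exact ih (fa n x)

lemma phi_fix_zero (u : FreeSemigroup Bool) : phi n u .zero = .zero := by
  induction u using FreeSemigroup.recOnMul with
  | ih1 t => cases t <;> rfl
  | ih2 x y hx hy => rw [phi_mul_apply, hy, hx]

/-- The constant-zero endomorphism. -/
def fz : Function.End En := fun _ => En.zero

/-- The invariant map on `W2`. -/
def psi (n : ℕ) : W2 → Function.End En :=
  WithZero.recZeroCoe fz (fun u => phi n u)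

lemma psi_zero : psi n 0 = fz := rfl
lemma psi_coe (u : FreeSemigroup Bool) : psi n (u : W2) = phi n u := rfl

lemma psi_mul (u v : W2) : psi n (u * v) = psi n u * psi n v := by
  induction u using WithZero.recZeroCoe with
  | zero =>
    rw [zero_mul, psi_zero]
    funext x
    rfl
  | coe u =>
    induction v using WithZero.recZeroCoe with
    | zero =>
      rw [mul_zero, psi_zero]
      funext x
      exact (phi_fix_zero u).symm
    | coe v =>
      rw [← WithZero.coe_mul, psi_coe, psi_coe, psi_coe, map_mul]

lemma psi_rel (hn : 1 ≤ n) {p q : W2} (h : SnRel n p q) : psi n p = psi n q := by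
  rcases h with ⟨rfl, rfl⟩ | ⟨rfl, rfl⟩ | ⟨rfl, rfl⟩ | ⟨i, hi, rfl, rfl⟩
  · funext x
    show phi n (apow (n + 1)) x = En.zero
    rw [phi_apow (by omega)]
    cases x with
    | one => rw [fa_iter_one hn (by omega), if_neg (by omega)]
    | zero => exact fa_iter_zero _
    | A k => rw [fa_iter_A, if_neg (by omega)]
    | AB i => rw [fa_iter_AB, if_neg (by omega)]
    | BA j => exact fa_iter_BA (by omega) _
  · funext x
    show phi n (gb * gb) x = En.zero
    rw [phi_mul_apply]
    cases x <;> rfl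
  · funext x
    show phi n (ga * gb * ga) x = En.zero
    rw [phi_mul_apply, phi_mul_apply]
    show fa n (fb (fa n x)) = En.zero
    cases x with
    | A k =>
      show fa n (fb (if k < n then En.A (k+1) else En.zero)) = En.zero
      split <;> rfl
    | AB i =>
      show fa n (fb (if i < n then En.AB (i+1) else En.zero)) = En.zero
      split <;> rfl
    | _ => rfl
  · funext x
    show phi n (gb * apow i * gb) x = En.zero
    rw [phi_mul_apply, phi_mul_apply]
    show fb (phi n (apow i) (fb x)) = En.zero
    rw [phi_apow hi]
    cases x with
    | one =>
      show fb ((fa n)^[i] (En.AB 0)) = En.zero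
      rw [fa_iter_AB]
      split <;> rfl
    | A k =>
      show fb ((fa n)^[i] (En.BA k)) = En.zero
      rw [fa_iter_BA hi]; rfl
    | zero => rw [show fb En.zero = En.zero from rfl, fa_iter_zero]; rfl
    | AB i' => rw [show fb (En.AB i') = En.zero from rfl, fa_iter_zero]; rfl
    | BA j => rw [show fb (En.BA j) = En.zero from rfl, fa_iter_zero]; rfl

lemma psi_con (hn : 1 ≤ n) {u v : W2} (h : SnCon n u v) : psi n u = psi n v := by
  have h' : ConGen.Rel (SnRel n) u v := h
  clear h
  induction h' with
  | of p q hpq => exact psi_rel hn hpq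
  | refl => rfl
  | symm _ ih => exact ih.symm
  | trans _ _ ih1 ih2 => exact ih1.trans ih2
  | mul _ _ ih1 ih2 => rw [psi_mul, psi_mul, ih1, ih2]

/-- The normal form of a word. -/
def nfW (n : ℕ) (w : W2) : En := psi n w .one

lemma smk_nf (hn : 1 ≤ n) {u v : W2} (h : smk n u = smk n v) : nfW n u = nfW n v :=
  congrFun (psi_con hn (smk_eq_iff.1 h)) .one

/-- The word `aⁱ b` (with `a⁰ b = b`). -/
def wAB (i : ℕ) : FreeSemigroup Bool := if i = 0 then gb else apow i * gb

/-- The word `b aʲ`. -/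
def wBA (j : ℕ) : FreeSemigroup Bool := gb * apow j

lemma nfW_zero : nfW n 0 = .zero := rfl

lemma nfW_apow (hn : 1 ≤ n) {k : ℕ} (hk : 1 ≤ k) (hk2 : k ≤ n) :
    nfW n ((apow k : FreeSemigroup Bool) : W2) = .A k := by
  show phi n (apow k) .one = _
  rw [phi_apow hk, fa_iter_one hn hk, if_pos hk2]

lemma nfW_wAB {i : ℕ} (hi : i ≤ n) : nfW n ((wAB i : FreeSemigroup Bool) : W2) = .AB i := by
  rcases Nat.eq_zero_or_pos i with h | h
  · subst h; rfl
  · show phi n (wAB i) .one = _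
    rw [wAB, if_neg (by omega), phi_mul_apply]
    show phi n (apow i) (En.AB 0) = _
    rw [phi_apow h, fa_iter_AB, if_pos (by omega), Nat.zero_add]

lemma nfW_wBA (hn : 1 ≤ n) {j : ℕ} (hj : 1 ≤ j) (hj2 : j ≤ n) :
    nfW n ((wBA j : FreeSemigroup Bool) : W2) = .BA j := by
  show phi n (wBA j) .one = _
  rw [wBA, phi_mul_apply]
  show fb (phi n (apow j) .one) = _
  rw [phi_apow hj, fa_iter_one hn hj, if_pos hj2]
  rfl

/-! ### Elements and the multiplication table -/

/-- The element `aᵏ` of `Sₙ`. -/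
def eA (n k : ℕ) : Sn n := sk n (apow k)

/-- The element `aⁱ b` of `Sₙ`. -/
def eAB (n i : ℕ) : Sn n := sk n (wAB i)

/-- The element `b aʲ` of `Sₙ`. -/
def eBA (n j : ℕ) : Sn n := sk n (wBA j)

lemma wAB_pos {i : ℕ} (hi : 1 ≤ i) : wAB i = apow i * gb := by
  rw [wAB, if_neg (by omega)]

lemma T1 {k l : ℕ} (hk : 1 ≤ k) (hl : 1 ≤ l) : eA n k * eA n l = eA n (k + l) := by
  rw [eA, eA, eA, ← sk_mul, apow_add hk hl]

lemma T2 {k : ℕ} (hk : 1 ≤ k) (i : ℕ) : eA n k * eAB n i = eAB n (k + i) := by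
  rcases Nat.eq_zero_or_pos i with h | h
  · subst h
    rw [eA, eAB, eAB, ← sk_mul, wAB, if_pos rfl, Nat.add_zero, wAB_pos hk]
  · rw [eA, eAB, eAB, ← sk_mul, wAB_pos h, wAB_pos (by omega), ← mul_assoc,
      apow_add hk h]

lemma T3 {k j : ℕ} (hk : 1 ≤ k) (hj : 1 ≤ j) : eA n k * eBA n j = zz n := by
  rw [eA, eBA, ← sk_mul, wBA, ← mul_assoc]
  exact aba_big hk hj

lemma T4a {l : ℕ} : eAB n 0 * eA n l = eBA n l := by
  rw [eAB, eA, eBA, ← sk_mul, wAB, if_pos rfl, wBA]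

lemma T4b {i l : ℕ} (hi : 1 ≤ i) (hl : 1 ≤ l) : eAB n i * eA n l = zz n := by
  rw [eAB, eA, ← sk_mul, wAB_pos hi]
  exact aba_big hi hl

lemma T5 (i i' : ℕ) : eAB n i * eAB n i' = zz n := by
  rcases Nat.eq_zero_or_pos i' with h' | h' <;> rcases Nat.eq_zero_or_pos i with h | h
  · subst h; subst h'
    rw [show (eAB n 0 : Sn n) = sk n gb from by rw [eAB, wAB, if_pos rfl], ← sk_mul]
    exact rel_bb
  · subst h'
    rw [eAB, eAB, ← sk_mul, wAB_pos h, wAB, if_pos rfl, mul_assoc]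
    exact sk_zero_left rel_bb _
  · subst h
    rw [eAB, eAB, ← sk_mul, wAB, if_pos rfl, wAB_pos h', ← mul_assoc]
    exact rel_bab h'
  · rw [eAB, eAB, ← sk_mul, wAB_pos h, wAB_pos h',
      show apow i * gb * (apow i' * gb) = apow i * (gb * apow i' * gb) by
        simp only [mul_assoc]]
    exact sk_zero_left (rel_bab h') _

lemma T6 (i j : ℕ) : eAB n i * eBA n j = zz n := by
  rcases Nat.eq_zero_or_pos i with h | h
  · subst h
    rw [eAB, eBA, ← sk_mul, wAB, if_pos rfl, wBA, ← mul_assoc]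
    exact sk_zero_right rel_bb _
  · rw [eAB, eBA, ← sk_mul, wAB_pos h, wBA,
      show apow i * gb * (gb * apow j) = apow i * (gb * gb * apow j) by
        simp only [mul_assoc]]
    exact sk_zero_left (sk_zero_right rel_bb _) _

lemma T7 {j l : ℕ} (hj : 1 ≤ j) (hl : 1 ≤ l) : eBA n j * eA n l = eBA n (j + l) := by
  rw [eBA, eA, eBA, ← sk_mul, wBA, wBA, mul_assoc, apow_add hj hl]

lemma T8 {j : ℕ} (hj : 1 ≤ j) (i : ℕ) : eBA n j * eAB n i = zz n := by
  rcases Nat.eq_zero_or_pos i with h | h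
  · subst h
    rw [eBA, eAB, ← sk_mul, wBA, wAB, if_pos rfl]
    exact rel_bab hj
  · rw [eBA, eAB, ← sk_mul, wBA, wAB_pos h,
      show gb * apow j * (apow i * gb) = gb * apow (j + i) * gb by
        rw [← apow_add hj h]; simp only [mul_assoc]]
    exact rel_bab (by omega)

lemma T9 {j j' : ℕ} (hj : 1 ≤ j) (hj' : 1 ≤ j') : eBA n j * eBA n j' = zz n := by
  rw [eBA, eBA, ← sk_mul, wBA, wBA,
    show gb * apow j * (gb * apow j') = gb * apow j * gb * apow j' by
      simp only [mul_assoc]]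
  exact sk_zero_right (rel_bab hj) _

lemma eA_big {m : ℕ} (hm : n + 1 ≤ m) : eA n m = zz n := apow_big hm

lemma eAB_big {m : ℕ} (hm : n + 1 ≤ m) : eAB n m = zz n := by
  rw [eAB, wAB_pos (by omega)]
  exact sk_zero_right (apow_big hm) _

lemma eBA_big {m : ℕ} (hm : n + 1 ≤ m) : eBA n m = zz n := by
  rw [eBA, wBA]
  exact sk_zero_left (apow_big hm) _

/-! ### Classification of elements -/

/-- Every element of `Sₙ` is zero, a power `aᵏ`, `aⁱ b`, or `b aʲ`. -/
def IsStd (n : ℕ) (x : Sn n) : Prop :=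
  x = zz n ∨ (∃ k, 1 ≤ k ∧ k ≤ n ∧ x = eA n k) ∨ (∃ i, i ≤ n ∧ x = eAB n i) ∨
    (∃ j, 1 ≤ j ∧ j ≤ n ∧ x = eBA n j)

lemma isStd_zz : IsStd n (zz n) := Or.inl rfl

lemma std_mul {x y : Sn n} (hx : IsStd n x) (hy : IsStd n y) : IsStd n (x * y) := by
  rcases hx with rfl | ⟨k, hk1, hk2, rfl⟩ | ⟨i, hi, rfl⟩ | ⟨j, hj1, hj2, rfl⟩
  · exact Or.inl (zz_mul _)
  all_goals rcases hy with rfl | ⟨l, hl1, hl2, rfl⟩ | ⟨i', hi', rfl⟩ | ⟨j', hj1', hj2', rfl⟩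
  -- x = aᵏ
  · exact Or.inl (mul_zz _)
  · rw [T1 hk1 hl1]
    rcases le_or_gt (k + l) n with h | h
    · exact Or.inr (Or.inl ⟨k + l, by omega, h, rfl⟩)
    · exact Or.inl (eA_big (by omega))
  · rw [T2 hk1]
    rcases le_or_gt (k + i') n with h | h
    · exact Or.inr (Or.inr (Or.inl ⟨k + i', h, rfl⟩))
    · exact Or.inl (eAB_big (by omega))
  · exact Or.inl (T3 hk1 hj1')
  -- x = aⁱ b
  · exact Or.inl (mul_zz _)
  · rcases Nat.eq_zero_or_pos i with h | h
    · subst h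
      rw [T4a]
      exact Or.inr (Or.inr (Or.inr ⟨l, hl1, hl2, rfl⟩))
    · exact Or.inl (T4b h hl1)
  · exact Or.inl (T5 i i')
  · exact Or.inl (T6 i j')
  -- x = b aʲ
  · exact Or.inl (mul_zz _)
  · rw [T7 hj1 hl1]
    rcases le_or_gt (j + l) n with h | h
    · exact Or.inr (Or.inr (Or.inr ⟨j + l, by omega, h, rfl⟩))
    · exact Or.inl (eBA_big (by omega))
  · exact Or.inl (T8 hj1 i')
  · exact Or.inl (T9 hj1 hj1')

lemma classify (hn : 1 ≤ n) (x : Sn n) : IsStd n x := by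
  obtain ⟨w, rfl⟩ := sn_surj x
  induction w using WithZero.recZeroCoe with
  | zero => exact isStd_zz
  | coe u =>
    induction u using FreeSemigroup.recOnMul with
    | ih1 t =>
      cases t
      · exact Or.inr (Or.inl ⟨1, le_rfl, hn, rfl⟩)
      · exact Or.inr (Or.inr (Or.inl ⟨0, by omega, rfl⟩))
    | ih2 t v ht hv =>
      have : smk n ((↑(FreeSemigroup.of t * v) : W2)) = sk n (FreeSemigroup.of t) * sk n v :=
        sk_mul _ v
      rw [this]
      exact std_mul ht hv

/-! ### Distinctness -/

lemma sk_eq_nf (hn : 1 ≤ n) {u v : FreeSemigroup Bool} (h : sk n u = sk n v) :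
    nfW n (u : W2) = nfW n (v : W2) := smk_nf hn h

lemma sk_eq_zz_nf (hn : 1 ≤ n) {u : FreeSemigroup Bool} (h : sk n u = zz n) :
    nfW n (u : W2) = .zero := smk_nf hn h

lemma eA_eq_nf (hn : 1 ≤ n) {k : ℕ} (hk1 : 1 ≤ k) (hk2 : k ≤ n) :
    nfW n ((apow k : FreeSemigroup Bool) : W2) = .A k := nfW_apow hn hk1 hk2

lemma eAB_ne_eBA (hn : 1 ≤ n) {k k' : ℕ} (hk : k ≤ n) (hk1' : 1 ≤ k') (hk2' : k' ≤ n) :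
    eAB n k ≠ eBA n k' := by
  intro h
  have := sk_eq_nf hn h
  rw [nfW_wAB hk, nfW_wBA hn hk1' hk2'] at this
  exact En.noConfusion this

lemma eAB_ne_zz (hn : 1 ≤ n) {m : ℕ} (hm : m ≤ n) : eAB n m ≠ zz n := by
  intro h
  have := sk_eq_zz_nf hn h
  rw [nfW_wAB hm] at this
  exact En.noConfusion this

lemma eBA_ne_zz (hn : 1 ≤ n) {m : ℕ} (hm1 : 1 ≤ m) (hm2 : m ≤ n) : eBA n m ≠ zz n := by
  intro h
  have := sk_eq_zz_nf hn h
  rw [nfW_wBA hn hm1 hm2] at this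
  exact En.noConfusion this

lemma eA_inj (hn : 1 ≤ n) {k k' : ℕ} (hk1 : 1 ≤ k) (hk2 : k ≤ n) (hk1' : 1 ≤ k')
    (hk2' : k' ≤ n) (h : eA n k = eA n k') : k = k' := by
  have := sk_eq_nf hn h
  rw [nfW_apow hn hk1 hk2, nfW_apow hn hk1' hk2'] at this
  exact (En.A.injEq _ _).mp this

lemma eAB_inj (hn : 1 ≤ n) {i i' : ℕ} (hi : i ≤ n) (hi' : i' ≤ n)
    (h : eAB n i = eAB n i') : i = i' := by
  have := sk_eq_nf hn h
  rw [nfW_wAB hi, nfW_wAB hi'] at this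
  exact (En.AB.injEq _ _).mp this

lemma eBA_inj (hn : 1 ≤ n) {j j' : ℕ} (hj1 : 1 ≤ j) (hj2 : j ≤ n) (hj1' : 1 ≤ j')
    (hj2' : j' ≤ n) (h : eBA n j = eBA n j') : j = j' := by
  have := sk_eq_nf hn h
  rw [nfW_wBA hn hj1 hj2, nfW_wBA hn hj1' hj2'] at this
  exact (En.BA.injEq _ _).mp this

/-! ### The center -/

lemma zz_mem_center : zz n ∈ Set.center (Sn n) :=
  Semigroup.mem_center_iff.mpr fun g => by rw [zz_mul, mul_zz]

lemma eABn_mem_center (hn : 1 ≤ n) : eAB n n ∈ Set.center (Sn n) := by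
  refine Semigroup.mem_center_iff.mpr fun g => ?_
  rcases classify hn g with rfl | ⟨k, hk1, hk2, rfl⟩ | ⟨i, hi, rfl⟩ | ⟨j, hj1, hj2, rfl⟩
  · rw [zz_mul, mul_zz]
  · rw [T2 hk1, eAB_big (by omega), T4b hn hk1]
  · rw [T5, T5]
  · rw [T8 hj1, T6]

lemma eBAn_mem_center (hn : 1 ≤ n) : eBA n n ∈ Set.center (Sn n) := by
  refine Semigroup.mem_center_iff.mpr fun g => ?_
  rcases classify hn g with rfl | ⟨k, hk1, hk2, rfl⟩ | ⟨i, hi, rfl⟩ | ⟨j, hj1, hj2, rfl⟩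
  · rw [zz_mul, mul_zz]
  · rw [T3 hk1 hn, T7 hn hk1, eBA_big (by omega)]
  · rw [T6, T8 hn]
  · rw [T9 hj1 hn, T9 hn hj1]

lemma eA_not_center (hn : 1 ≤ n) {k : ℕ} (hk1 : 1 ≤ k) (hk2 : k ≤ n) :
    eA n k ∉ Set.center (Sn n) := by
  intro h
  have hc := Semigroup.mem_center_iff.mp h (eAB n 0)
  rw [T4a, T2 hk1, Nat.add_zero] at hc
  exact eAB_ne_eBA hn hk2 hk1 hk2 hc.symm

lemma eAB_not_center (hn : 1 ≤ n) {i : ℕ} (hi : i < n) :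
    eAB n i ∉ Set.center (Sn n) := by
  intro h
  have hc := Semigroup.mem_center_iff.mp h (eA n 1)
  rw [T2 le_rfl] at hc
  rcases Nat.eq_zero_or_pos i with h0 | h0
  · subst h0
    rw [T4a] at hc
    exact eAB_ne_eBA hn (by omega) le_rfl hn hc
  · rw [T4b h0 le_rfl] at hc
    exact eAB_ne_zz hn (by omega) hc

lemma eBA_not_center (hn : 1 ≤ n) {j : ℕ} (hj1 : 1 ≤ j) (hj : j < n) :
    eBA n j ∉ Set.center (Sn n) := by
  intro h
  have hc := Semigroup.mem_center_iff.mp h (eA n 1)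
  rw [T3 le_rfl hj1, T7 hj1 le_rfl] at hc
  exact eBA_ne_zz hn (by omega) (by omega) hc.symm

lemma classify_nc (hn : 1 ≤ n) {x : Sn n} (hx : x ∉ Set.center (Sn n)) :
    (∃ k, 1 ≤ k ∧ k ≤ n ∧ x = eA n k) ∨ (∃ i, i < n ∧ x = eAB n i) ∨
      (∃ j, 1 ≤ j ∧ j < n ∧ x = eBA n j) := by
  rcases classify hn x with rfl | ⟨k, hk1, hk2, rfl⟩ | ⟨i, hi, rfl⟩ | ⟨j, hj1, hj2, rfl⟩
  · exact absurd zz_mem_center hx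
  · exact Or.inl ⟨k, hk1, hk2, rfl⟩
  · rcases Nat.lt_or_ge i n with h | h
    · exact Or.inr (Or.inl ⟨i, h, rfl⟩)
    · have : i = n := by omega
      subst this
      exact absurd (eABn_mem_center hn) hx
  · rcases Nat.lt_or_ge j n with h | h
    · exact Or.inr (Or.inr ⟨j, hj1, h, rfl⟩)
    · have : j = n := by omega
      subst this
      exact absurd (eBAn_mem_center hn) hx

/-! ### Commutation constraints -/

lemma comm_A_AB (hn : 1 ≤ n) {k i : ℕ} (hk1 : 1 ≤ k) (hk2 : k ≤ n) (hi : i < n)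
    (h : eA n k * eAB n i = eAB n i * eA n k) : n + 1 ≤ k + i := by
  by_contra hc
  push_neg at hc
  rw [T2 hk1] at h
  rcases Nat.eq_zero_or_pos i with h0 | h0
  · subst h0
    rw [T4a, Nat.add_zero] at h
    exact eAB_ne_eBA hn hk2 hk1 hk2 h
  · rw [T4b h0 hk1] at h
    exact eAB_ne_zz hn (by omega) h

lemma comm_A_BA (hn : 1 ≤ n) {k j : ℕ} (hk1 : 1 ≤ k) (hk2 : k ≤ n) (hj1 : 1 ≤ j)
    (hj : j < n) (h : eA n k * eBA n j = eBA n j * eA n k) : n + 1 ≤ k + j := by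
  by_contra hc
  push_neg at hc
  rw [T3 hk1 hj1, T7 hj1 hk1] at h
  exact eBA_ne_zz hn (by omega) (by omega) h.symm

/-! ### The normal form on the quotient and the counting map -/

/-- Normal form of an element of `Sₙ`. -/
def nfS (n : ℕ) (hn : 1 ≤ n) : Sn n → En :=
  Quotient.lift (nfW n) (fun _ _ h => congrFun (psi_con hn h) .one)

lemma nfS_smk (hn : 1 ≤ n) (w : W2) : nfS n hn (smk n w) = nfW n w := rfl

/-- Index used to count cliques. -/
def gE (n : ℕ) : En → ℕ
  | .A k => n - k
  | .AB i => i
  | .BA j => n - 1 + j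
  | _ => 0

lemma gE_eA (hn : 1 ≤ n) {k : ℕ} (hk1 : 1 ≤ k) (hk2 : k ≤ n) :
    gE n (nfS n hn (eA n k)) = n - k := by
  show gE n (nfW n _) = _
  rw [nfW_apow hn hk1 hk2]
  rfl

lemma gE_eAB (hn : 1 ≤ n) {i : ℕ} (hi : i ≤ n) :
    gE n (nfS n hn (eAB n i)) = i := by
  show gE n (nfW n _) = _
  rw [nfW_wAB hi]
  rfl

lemma gE_eBA (hn : 1 ≤ n) {j : ℕ} (hj1 : 1 ≤ j) (hj2 : j ≤ n) :
    gE n (nfS n hn (eBA n j)) = n - 1 + j := by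
  show gE n (nfW n _) = _
  rw [nfW_wBA hn hj1 hj2]
  rfl

/-! ### Upper bound -/

lemma clique_bound (hn : 1 ≤ n) {N : ℕ}
    {t : Finset {x : Sn n // x ∉ Set.center (Sn n)}}
    (h : (CommutingGraph (Sn n)).IsNClique N t) : N ≤ 2 * n - 1 := by
  classical
  rw [← h.2]
  have hle : t.card ≤ (Finset.range (2 * n - 1)).card := by
    apply Finset.card_le_card_of_injOn (fun v => gE n (nfS n hn v.1))
    · intro v hv
      simp only [Finset.coe_range, Set.mem_Iio]
      rcases classify_nc hn v.2 with ⟨k, hk1, hk2, hveq⟩ | ⟨i, hi, hveq⟩ |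
        ⟨j, hj1, hj2, hveq⟩
      · rw [hveq, gE_eA hn hk1 hk2]; omega
      · rw [hveq, gE_eAB hn (by omega)]; omega
      · rw [hveq, gE_eBA hn hj1 (by omega)]; omega
    · intro v hv w hw hg
      simp only at hg
      rcases classify_nc hn v.2 with ⟨k, hk1, hk2, hveq⟩ | ⟨i, hi, hveq⟩ |
        ⟨j, hj1, hj2, hveq⟩ <;>
        rcases classify_nc hn w.2 with ⟨k', hk1', hk2', hweq⟩ | ⟨i', hi', hweq⟩ |
          ⟨j', hj1', hj2', hweq⟩
      -- A, A
      · rw [hveq, hweq, gE_eA hn hk1 hk2, gE_eA hn hk1' hk2'] at hg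
        have : k = k' := by omega
        exact Subtype.ext (by rw [hveq, hweq, this])
      -- A, AB
      · by_contra hne
        have adj : v ≠ w ∧ (v : Sn n) * w = w * v := h.1 hv hw hne
        have hcomm : eA n k * eAB n i' = eAB n i' * eA n k := by
          rw [← hveq, ← hweq]; exact adj.2
        have := comm_A_AB hn hk1 hk2 hi' hcomm
        rw [hveq, hweq, gE_eA hn hk1 hk2, gE_eAB hn (by omega)] at hg
        omega
      -- A, BA
      · rw [hveq, hweq, gE_eA hn hk1 hk2, gE_eBA hn hj1' (by omega)] at hg
        omega
      -- AB, A
      · by_contra hne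
        have adj : v ≠ w ∧ (v : Sn n) * w = w * v := h.1 hv hw hne
        have hcomm : eA n k' * eAB n i = eAB n i * eA n k' := by
          rw [← hveq, ← hweq]; exact adj.2.symm
        have := comm_A_AB hn hk1' hk2' hi hcomm
        rw [hveq, hweq, gE_eAB hn (by omega), gE_eA hn hk1' hk2'] at hg
        omega
      -- AB, AB
      · rw [hveq, hweq, gE_eAB hn (by omega), gE_eAB hn (by omega)] at hg
        exact Subtype.ext (by rw [hveq, hweq, hg])
      -- AB, BA
      · rw [hveq, hweq, gE_eAB hn (by omega), gE_eBA hn hj1' (by omega)] at hg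
        omega
      -- BA, A
      · rw [hveq, hweq, gE_eBA hn hj1 (by omega), gE_eA hn hk1' hk2'] at hg
        omega
      -- BA, AB
      · rw [hveq, hweq, gE_eBA hn hj1 (by omega), gE_eAB hn (by omega)] at hg
        omega
      -- BA, BA
      · rw [hveq, hweq, gE_eBA hn hj1 (by omega), gE_eBA hn hj1' (by omega)] at hg
        have : j = j' := by omega
        exact Subtype.ext (by rw [hveq, hweq, this])
  simpa using hle

/-! ### Lower bound: an explicit clique of size 2n - 1 -/

/-- The vertices of the big clique. -/
def vert (n : ℕ) (hn : 1 ≤ n) (m : ℕ) : {x : Sn n // x ∉ Set.center (Sn n)} :=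
  if h : m < n then ⟨eAB n m, eAB_not_center hn h⟩
  else if h2 : m - n + 1 < n then ⟨eBA n (m - n + 1), eBA_not_center hn (by omega) h2⟩
  else ⟨eA n 1, eA_not_center hn le_rfl hn⟩

lemma vert_spec (hn : 1 ≤ n) {m : ℕ} (hm : m < 2 * n - 1) :
    (m < n ∧ (vert n hn m).1 = eAB n m) ∨
      (n ≤ m ∧ m - n + 1 < n ∧ (vert n hn m).1 = eBA n (m - n + 1)) := by
  rcases Nat.lt_or_ge m n with h | h
  · left
    refine ⟨h, ?_⟩
    rw [vert, dif_pos h]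
  · right
    refine ⟨h, by omega, ?_⟩
    rw [vert, dif_neg (by omega), dif_pos (by omega)]

lemma comm_BC {x y : Sn n}
    (hx : (∃ i, x = eAB n i) ∨ (∃ j, 1 ≤ j ∧ x = eBA n j))
    (hy : (∃ i, y = eAB n i) ∨ (∃ j, 1 ≤ j ∧ y = eBA n j)) : x * y = y * x := by
  rcases hx with ⟨i, rfl⟩ | ⟨j, hj, rfl⟩ <;> rcases hy with ⟨i', rfl⟩ | ⟨j', hj', rfl⟩
  · rw [T5, T5]
  · rw [T6, T8 hj']
  · rw [T8 hj, T6]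
  · rw [T9 hj hj', T9 hj' hj]

attribute [local instance] Classical.propDecidable

lemma big_clique (hn : 1 ≤ n) :
    (CommutingGraph (Sn n)).IsNClique (2 * n - 1)
      ((Finset.range (2 * n - 1)).image (vert n hn)) := by
  classical
  constructor
  · intro x hx y hy hne
    simp only [Finset.coe_image, Set.mem_image, Finset.mem_coe, Finset.mem_range] at hx hy
    obtain ⟨m1, hm1, rfl⟩ := hx
    obtain ⟨m2, hm2, rfl⟩ := hy
    refine (⟨hne, ?_⟩ : _ ≠ _ ∧ _)
    apply comm_BC
    · rcases vert_spec hn hm1 with ⟨_, hf⟩ | ⟨_, _, hf⟩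
      · exact Or.inl ⟨m1, hf⟩
      · exact Or.inr ⟨m1 - n + 1, by omega, hf⟩
    · rcases vert_spec hn hm2 with ⟨_, hf⟩ | ⟨_, _, hf⟩
      · exact Or.inl ⟨m2, hf⟩
      · exact Or.inr ⟨m2 - n + 1, by omega, hf⟩
  · rw [Finset.card_image_of_injOn, Finset.card_range]
    intro m1 hm1 m2 hm2 heq
    rw [Finset.coe_range, Set.mem_Iio] at hm1 hm2
    have heq' : (vert n hn m1).1 = (vert n hn m2).1 := by rw [heq]
    rcases vert_spec hn hm1 with ⟨hl1, hf1⟩ | ⟨hl1, hl1', hf1⟩ <;>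
      rcases vert_spec hn hm2 with ⟨hl2, hf2⟩ | ⟨hl2, hl2', hf2⟩
    · rw [hf1, hf2] at heq'
      exact eAB_inj hn (by omega) (by omega) heq'
    · rw [hf1, hf2] at heq'
      exact absurd heq' (eAB_ne_eBA hn (by omega) (by omega) (by omega))
    · rw [hf1, hf2] at heq'
      exact absurd heq'.symm (eAB_ne_eBA hn (by omega) (by omega) (by omega))
    · rw [hf1, hf2] at heq'
      have := eBA_inj hn (by omega) (by omega) (by omega) (by omega) heq'
      omega

theorem Sn_cliqueNum (n : ℕ) (hn : 1 ≤ n) :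
    (CommutingGraph (Sn n)).cliqueNum = 2 * n - 1 := by
  have hub : ∀ N ∈ {N | ∃ s, (CommutingGraph (Sn n)).IsNClique N s}, N ≤ 2 * n - 1 := by
    rintro N ⟨s, hs⟩
    exact clique_bound hn hs
  apply le_antisymm
  · exact csSup_le ⟨0, ∅, (SimpleGraph.isNClique_empty).mpr rfl⟩ hub
  · exact le_csSup ⟨2 * n - 1, hub⟩ ⟨_, big_clique hn⟩
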